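/- The two expressions for the Dirichlet heat kernel on the interval [0,L] agree: for 0 < x, y < L and t > 0, (4πt)^{-1/2} Σ_{k∈ℤ} (e^{−(x−y+2kL)²/(4t)} − e^{−(x+y+2kL)²/(4t)}) = (2/L) Σ_{k=1}^∞ e^{−π²k²t/L²} sin(πkx/L) sin(πky/L). -/

import Mathlib

open Real


lemma gauss_summable_nat {c : ℝ} (hc : 0 < c) (s : ℝ) :
    Summable fun n : ℕ => Real.exp (-c * ((n : ℝ) + s) ^ 2) := by
  apply summable_of_isBigO_nat (summable_pow_mul_exp_neg_nat_mul 0 one_pos)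
  rw [Asymptotics.isBigO_iff]
  refine ⟨1, ?_⟩
  rw [Filter.eventually_atTop]
  obtain ⟨N, hN⟩ := exists_nat_ge (max (2 * |s|) (4 / c))
  refine ⟨N, fun n hn => ?_⟩
  have hn' : (N : ℝ) ≤ n := Nat.cast_le.mpr hn
  have h1 : 2 * |s| ≤ (n : ℝ) := le_trans (le_trans (le_max_left _ _) hN) hn'
  have h2 : 4 / c ≤ (n : ℝ) := le_trans (le_trans (le_max_right _ _) hN) hn'
  have hns : (n : ℝ) / 2 ≤ (n : ℝ) + s := by
    have := abs_le.mp (le_refl |s|) |>.1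
    nlinarith [abs_nonneg s, neg_abs_le s]
  have hge : (n : ℝ) ≤ c * ((n : ℝ) + s) ^ 2 := by
    have h0 : (0:ℝ) ≤ (n:ℝ)/2 := by positivity
    have : ((n:ℝ)/2)^2 ≤ ((n:ℝ)+s)^2 := by
      apply sq_le_sq' <;> nlinarith
    have h4 : 4 ≤ c * (n : ℝ) := by
      rw [div_le_iff₀ hc] at h2; linarith [h2]
    nlinarith
  simp only [pow_zero, one_mul, norm_mul, Real.norm_eq_abs, abs_exp, one_mul]
  rw [Real.exp_le_exp]
  push_cast
  linarith

lemma gauss_summable {c : ℝ} (hc : 0 < c) (s : ℝ) :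
    Summable fun n : ℤ => Real.exp (-c * ((n : ℝ) + s) ^ 2) := by
  apply Summable.of_nat_of_neg_add_one
  · exact_mod_cast gauss_summable_nat hc s
  · have := gauss_summable_nat hc (1 - s)
    convert this using 2 with n
    push_cast
    ring_nf



lemma image_transform (L t v : ℝ) (hL : 0 < L) (ht : 0 < t) :
    ∑' k : ℤ, Real.exp (-(v + 2 * (k : ℝ) * L) ^ 2 / (4 * t))
      = (Real.pi * t / L ^ 2) ^ ((1:ℝ)/2) *
        ∑' n : ℤ, Real.exp (-(Real.pi ^ 2 * (n : ℝ) ^ 2 / L ^ 2) * t)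
          * Real.cos (Real.pi * (n : ℝ) * v / L) := by
  have hπ := Real.pi_pos
  have haR : (0:ℝ) < Real.pi * t / L ^ 2 := by positivity
  set a : ℂ := ((Real.pi * t / L ^ 2 : ℝ) : ℂ) with ha_def
  have ha : 0 < a.re := by rw [ha_def, Complex.ofReal_re]; exact haR
  set s : ℝ := v / (2 * L) with hs_def
  set b : ℂ := -Complex.I * (s : ℂ) with hb_def
  have key := Complex.tsum_exp_neg_quadratic ha b
  -- rewrite the RHS terms of key as real exponentials
  have hIb : Complex.I * b = (s : ℂ) := by
    rw [hb_def]; rw [show Complex.I * (-Complex.I * (s:ℂ)) = -(Complex.I*Complex.I) * s by ring,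
      Complex.I_mul_I]; ring
  have hrhs : ∀ n : ℤ, Complex.exp (-(Real.pi:ℂ) / a * ((n:ℂ) + Complex.I * b) ^ 2)
      = ((Real.exp (-(v + 2 * (n : ℝ) * L) ^ 2 / (4 * t)) : ℝ) : ℂ) := by
    intro n
    rw [hIb, Complex.ofReal_exp]
    congr 1
    have : -(Real.pi:ℂ) / a = ((-(L^2/t) : ℝ) : ℂ) := by
      rw [ha_def]
      push_cast
      field_simp
    rw [this]
    push_cast
    rw [hs_def]
    push_cast
    have hL0 : (L:ℂ) ≠ 0 := by exact_mod_cast hL.ne'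
    have ht0 : (t:ℂ) ≠ 0 := by exact_mod_cast ht.ne'
    field_simp
    ring
  -- rewrite LHS terms: compute re/im
  have hterm : ∀ n : ℤ, -(Real.pi:ℂ) * a * (n:ℂ) ^ 2 + 2 * (Real.pi:ℂ) * b * (n:ℂ)
      = ((-(Real.pi ^ 2 * (n:ℝ) ^ 2 / L ^ 2) * t : ℝ) : ℂ)
        + ((-(2 * Real.pi * s * n) : ℝ) : ℂ) * Complex.I := by
    intro n
    rw [ha_def, hb_def]
    push_cast
    ring
  have hre : ∀ n : ℤ, (Complex.exp (-(Real.pi:ℂ) * a * (n:ℂ) ^ 2 + 2 * (Real.pi:ℂ) * b * (n:ℂ))).re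
      = Real.exp (-(Real.pi ^ 2 * (n:ℝ) ^ 2 / L ^ 2) * t) * Real.cos (Real.pi * (n:ℝ) * v / L) := by
    intro n
    rw [hterm n, Complex.exp_re]
    simp only [Complex.add_re, Complex.ofReal_re, Complex.mul_re, Complex.I_re, Complex.I_im,
      Complex.ofReal_im, Complex.add_im, Complex.mul_im]
    ring_nf
    rw [Real.cos_neg]
    rw [hs_def]; ring
  have hsummable : Summable fun n : ℤ =>
      Complex.exp (-(Real.pi:ℂ) * a * (n:ℂ) ^ 2 + 2 * (Real.pi:ℂ) * b * (n:ℂ)) := by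
    apply Summable.of_norm
    have hg := gauss_summable (c := Real.pi^2 * t / L^2) (by positivity) 0
    apply hg.congr
    intro n
    rw [hterm n, Complex.norm_exp]
    simp only [Complex.add_re, Complex.ofReal_re, Complex.mul_re, Complex.I_re, Complex.I_im,
      Complex.ofReal_im]
    ring_nf
  set r : ℝ := (Real.pi * t / L ^ 2) ^ ((1:ℝ)/2) with hr_def
  have hrpos : 0 < r := Real.rpow_pos_of_pos haR _
  have hacpow : a ^ ((1:ℂ)/2) = (r : ℂ) := by
    rw [ha_def, hr_def, show ((1:ℂ)/2) = (((1:ℝ)/2 : ℝ) : ℂ) by norm_num,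
      ← Complex.ofReal_cpow haR.le]
  have hr0 : (r : ℂ) ≠ 0 := by exact_mod_cast hrpos.ne'
  rw [show (1/2 : ℂ) = (1:ℂ)/2 by norm_num, hacpow] at key
  have key2 : ((∑' k : ℤ, Real.exp (-(v + 2 * (k:ℝ) * L) ^ 2 / (4 * t)) : ℝ) : ℂ)
      = (r:ℂ) * ∑' n : ℤ,
          Complex.exp (-(Real.pi:ℂ) * a * (n:ℂ) ^ 2 + 2 * (Real.pi:ℂ) * b * (n:ℂ)) := by
    rw [Complex.ofReal_tsum]
    rw [show (∑' k : ℤ, ((Real.exp (-(v + 2 * (k:ℝ) * L) ^ 2 / (4 * t)) : ℝ) : ℂ))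
        = ∑' n : ℤ, Complex.exp (-(Real.pi:ℂ) / a * ((n:ℂ) + Complex.I * b) ^ 2) from
      tsum_congr fun n => (hrhs n).symm]
    rw [key]
    field_simp
  have hfinal := congrArg Complex.re key2
  rw [Complex.ofReal_re, Complex.re_ofReal_mul] at hfinal
  rw [hfinal, ← (Complex.hasSum_re hsummable.hasSum).tsum_eq]
  congr 1
  exact tsum_congr hre


lemma summable_image (L t v : ℝ) (hL : 0 < L) (ht : 0 < t) :
    Summable fun k : ℤ => Real.exp (-(v + 2 * (k : ℝ) * L) ^ 2 / (4 * t)) := by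
  have h := gauss_summable (c := L ^ 2 / t) (div_pos (pow_pos hL 2) ht) (v / (2 * L))
  apply h.congr
  intro k
  congr 1
  field_simp
  ring

lemma summable_g (L t : ℝ) (hL : 0 < L) (ht : 0 < t) :
    Summable fun n : ℤ => Real.exp (-(Real.pi ^ 2 * (n : ℝ) ^ 2 / L ^ 2) * t) := by
  have h := gauss_summable (c := Real.pi ^ 2 * t / L ^ 2) (by positivity) 0
  apply h.congr
  intro n
  congr 1
  ring

lemma summable_gcos (L t v : ℝ) (hL : 0 < L) (ht : 0 < t) :
    Summable fun n : ℤ => Real.exp (-(Real.pi ^ 2 * (n : ℝ) ^ 2 / L ^ 2) * t)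
      * Real.cos (Real.pi * (n : ℝ) * v / L) := by
  apply (summable_g L t hL ht).of_norm_bounded
  intro n
  rw [Real.norm_eq_abs, abs_mul, Real.abs_exp]
  calc Real.exp _ * |Real.cos _| ≤ Real.exp _ * 1 := by
        gcongr; exact Real.abs_cos_le_one _
    _ = _ := mul_one _

lemma summable_F (L t x y : ℝ) (hL : 0 < L) (ht : 0 < t) :
    Summable fun n : ℤ => Real.exp (-(Real.pi ^ 2 * (n : ℝ) ^ 2 / L ^ 2) * t)
      * Real.sin (Real.pi * (n : ℝ) * x / L) * Real.sin (Real.pi * (n : ℝ) * y / L) := by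
  apply (summable_g L t hL ht).of_norm_bounded
  intro n
  rw [Real.norm_eq_abs, abs_mul, abs_mul, Real.abs_exp]
  have h1 := Real.abs_sin_le_one (Real.pi * (n : ℝ) * x / L)
  have h2 := Real.abs_sin_le_one (Real.pi * (n : ℝ) * y / L)
  have he := (Real.exp_pos (-(Real.pi ^ 2 * (n : ℝ) ^ 2 / L ^ 2) * t)).le
  calc Real.exp (-(Real.pi ^ 2 * (n : ℝ) ^ 2 / L ^ 2) * t)
        * |Real.sin (Real.pi * (n : ℝ) * x / L)| * |Real.sin (Real.pi * (n : ℝ) * y / L)|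
      = Real.exp (-(Real.pi ^ 2 * (n : ℝ) ^ 2 / L ^ 2) * t)
        * (|Real.sin (Real.pi * (n : ℝ) * x / L)| * |Real.sin (Real.pi * (n : ℝ) * y / L)|) := by
        ring
    _ ≤ Real.exp (-(Real.pi ^ 2 * (n : ℝ) ^ 2 / L ^ 2) * t) * 1 := by
        gcongr
        exact mul_le_one₀ h1 (abs_nonneg _) h2
    _ = _ := mul_one _

set_option maxHeartbeats 1000000 in
/-- The image-charge and spectral expressions for the Dirichlet heat kernel on `[0,L]`
agree. -/
theorem interval_heat_kernel_two_expressions (L t x y : ℝ) (hL : 0 < L)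
    (hx : 0 < x) (hxL : x < L) (hy : 0 < y) (hyL : y < L) (ht : 0 < t) :
    (4 * Real.pi * t) ^ (-(1:ℝ)/2) *
        ∑' k : ℤ, (Real.exp (-(x - y + 2 * (k:ℝ) * L)^2 / (4 * t))
          - Real.exp (-(x + y + 2 * (k:ℝ) * L)^2 / (4 * t)))
      = (2 / L) * ∑' k : ℕ,
          Real.exp (-(Real.pi^2 * ((k:ℝ)+1)^2 / L^2) * t) *
            Real.sin (Real.pi * ((k:ℝ)+1) * x / L) *
            Real.sin (Real.pi * ((k:ℝ)+1) * y / L) := by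
  have hπ := Real.pi_pos
  have hL0 : L ≠ 0 := hL.ne'
  -- split the difference of sums
  rw [Summable.tsum_sub (summable_image L t (x - y) hL ht) (summable_image L t (x + y) hL ht)]
  rw [image_transform L t (x - y) hL ht, image_transform L t (x + y) hL ht]
  rw [← mul_sub, ← Summable.tsum_sub (summable_gcos L t (x - y) hL ht) (summable_gcos L t (x + y) hL ht)]
  -- combine the cosines into sines
  have hcos : ∀ n : ℤ,
      Real.exp (-(Real.pi ^ 2 * (n : ℝ) ^ 2 / L ^ 2) * t) * Real.cos (Real.pi * (n:ℝ) * (x - y) / L)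
        - Real.exp (-(Real.pi ^ 2 * (n : ℝ) ^ 2 / L ^ 2) * t)
          * Real.cos (Real.pi * (n:ℝ) * (x + y) / L)
      = 2 * (Real.exp (-(Real.pi ^ 2 * (n : ℝ) ^ 2 / L ^ 2) * t)
          * Real.sin (Real.pi * (n:ℝ) * x / L) * Real.sin (Real.pi * (n:ℝ) * y / L)) := by
    intro n
    have h1 : Real.pi * (n:ℝ) * (x - y) / L
        = Real.pi * (n:ℝ) * x / L - Real.pi * (n:ℝ) * y / L := by ring
    have h2 : Real.pi * (n:ℝ) * (x + y) / L
        = Real.pi * (n:ℝ) * x / L + Real.pi * (n:ℝ) * y / L := by ring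
    rw [h1, h2, Real.cos_sub, Real.cos_add]
    ring
  rw [tsum_congr hcos, tsum_mul_left]
  -- fold the ℤ-sum into a ℕ-sum
  have hFsum : Summable fun n : ℤ => Real.exp (-(Real.pi ^ 2 * (n : ℝ) ^ 2 / L ^ 2) * t)
      * Real.sin (Real.pi * (n : ℝ) * x / L) * Real.sin (Real.pi * (n : ℝ) * y / L) :=
    summable_F L t x y hL ht
  have hFneg : ∀ n : ℕ, Real.exp (-(Real.pi ^ 2 * ((-((n:ℝ) + 1))) ^ 2 / L ^ 2) * t)
      * Real.sin (Real.pi * (-((n:ℝ) + 1)) * x / L) * Real.sin (Real.pi * (-((n:ℝ) + 1)) * y / L)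
      = Real.exp (-(Real.pi ^ 2 * ((n:ℝ) + 1) ^ 2 / L ^ 2) * t)
        * Real.sin (Real.pi * ((n:ℝ) + 1) * x / L) * Real.sin (Real.pi * ((n:ℝ) + 1) * y / L) := by
    intro n
    rw [show Real.pi * (-((n:ℝ) + 1)) * x / L = -(Real.pi * ((n:ℝ) + 1) * x / L) by ring,
      show Real.pi * (-((n:ℝ) + 1)) * y / L = -(Real.pi * ((n:ℝ) + 1) * y / L) by ring,
      Real.sin_neg, Real.sin_neg, show (-((n:ℝ)+1))^2 = ((n:ℝ)+1)^2 by ring]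
    ring
  have hznat : (∑' n : ℤ, Real.exp (-(Real.pi ^ 2 * (n : ℝ) ^ 2 / L ^ 2) * t)
      * Real.sin (Real.pi * (n : ℝ) * x / L) * Real.sin (Real.pi * (n : ℝ) * y / L))
      = 2 * ∑' k : ℕ, Real.exp (-(Real.pi^2 * ((k:ℝ)+1)^2 / L^2) * t) *
            Real.sin (Real.pi * ((k:ℝ)+1) * x / L) *
            Real.sin (Real.pi * ((k:ℝ)+1) * y / L) := by
    have hnat : Summable fun n : ℕ => Real.exp (-(Real.pi ^ 2 * (n : ℝ) ^ 2 / L ^ 2) * t)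
        * Real.sin (Real.pi * (n : ℝ) * x / L) * Real.sin (Real.pi * (n : ℝ) * y / L) := by
      have := hFsum.comp_injective Nat.cast_injective
      exact this.congr fun n => by push_cast; rfl
    have hnat' : Summable fun n : ℕ =>
        Real.exp (-(Real.pi ^ 2 * ((n:ℤ) : ℝ) ^ 2 / L ^ 2) * t)
          * Real.sin (Real.pi * ((n:ℤ) : ℝ) * x / L) * Real.sin (Real.pi * ((n:ℤ) : ℝ) * y / L) :=
      hFsum.comp_injective Nat.cast_injective
    have hneg' : Summable fun n : ℕ =>
        Real.exp (-(Real.pi ^ 2 * (((-((n:ℤ) + 1)) : ℤ) : ℝ) ^ 2 / L ^ 2) * t)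
          * Real.sin (Real.pi * (((-((n:ℤ) + 1)) : ℤ) : ℝ) * x / L)
          * Real.sin (Real.pi * (((-((n:ℤ) + 1)) : ℤ) : ℝ) * y / L) :=
      hFsum.comp_injective (fun a b h => by simpa using h : Function.Injective fun n : ℕ => -((n:ℤ) + 1))
    rw [tsum_of_nat_of_neg_add_one hnat' hneg']
    have e2 : (∑' n : ℕ, Real.exp (-(Real.pi ^ 2 * (((-((n:ℤ) + 1)) : ℤ) : ℝ) ^ 2 / L ^ 2) * t)
          * Real.sin (Real.pi * (((-((n:ℤ) + 1)) : ℤ) : ℝ) * x / L)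
          * Real.sin (Real.pi * (((-((n:ℤ) + 1)) : ℤ) : ℝ) * y / L))
        = ∑' k : ℕ, Real.exp (-(Real.pi^2 * ((k:ℝ)+1)^2 / L^2) * t) *
            Real.sin (Real.pi * ((k:ℝ)+1) * x / L) *
            Real.sin (Real.pi * ((k:ℝ)+1) * y / L) := by
      refine tsum_congr fun n => ?_
      push_cast
      exact hFneg n
    have e1 : (∑' n : ℕ, Real.exp (-(Real.pi ^ 2 * ((n:ℤ) : ℝ) ^ 2 / L ^ 2) * t)
          * Real.sin (Real.pi * ((n:ℤ) : ℝ) * x / L) * Real.sin (Real.pi * ((n:ℤ) : ℝ) * y / L))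
        = ∑' k : ℕ, Real.exp (-(Real.pi^2 * ((k:ℝ)+1)^2 / L^2) * t) *
            Real.sin (Real.pi * ((k:ℝ)+1) * x / L) *
            Real.sin (Real.pi * ((k:ℝ)+1) * y / L) := by
      rw [Summable.tsum_eq_zero_add hnat']
      have hz : Real.exp (-(Real.pi ^ 2 * (((0:ℕ):ℤ) : ℝ) ^ 2 / L ^ 2) * t)
          * Real.sin (Real.pi * (((0:ℕ):ℤ) : ℝ) * x / L)
          * Real.sin (Real.pi * (((0:ℕ):ℤ) : ℝ) * y / L) = 0 := by
        norm_num
      rw [hz, zero_add]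
      refine tsum_congr fun n => ?_
      push_cast
      ring_nf
    rw [e1, e2]
    ring
  rw [hznat]
  -- the constant
  have hcr : (4 * Real.pi * t) ^ (-(1:ℝ)/2) * (Real.pi * t / L ^ 2) ^ ((1:ℝ)/2) = 1 / (2 * L) := by
    have hpt : (0:ℝ) < Real.pi * t := by positivity
    rw [show (-(1:ℝ)/2) = -((1:ℝ)/2) by norm_num, Real.rpow_neg (by positivity),
      show (4 * Real.pi * t) = 2^2 * (Real.pi * t) by ring,
      Real.mul_rpow (by positivity) hpt.le, Real.div_rpow hpt.le (by positivity),
      ← Real.rpow_natCast 2 2, ← Real.rpow_mul (by norm_num),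
      ← Real.rpow_natCast L 2, ← Real.rpow_mul hL.le]
    norm_num
    have hs : (0:ℝ) < (Real.pi * t) ^ ((1:ℝ)/2) := Real.rpow_pos_of_pos hpt _
    field_simp
  rw [← mul_assoc, ← mul_assoc, hcr]
  ring
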